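/- For the error dynamics c̃' = -k_c c̃, τ̃ᵢ' = Tᵢᵀν·χ̃ᵢ - k_τᵢ τ̃ᵢ, χ̃ᵢ' = Xᵢᵀν(χᵢ + χ̂ᵢ)χ̃ᵢ - k_χᵢ(Tᵢᵀν)ᵀτ̃ᵢ, the Lyapunov function V = ½Σᵢ(‖τ̃ᵢ‖² + χ̃ᵢ²/k_χᵢ) + ½‖c̃‖² has time derivative V' = -k_c‖c̃‖² + Σᵢ(-k_τᵢ‖τ̃ᵢ‖² + (1/k_χᵢ)(Xᵢᵀν)(χᵢ + χ̂ᵢ)χ̃ᵢ²). -/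

import Mathlib

open Matrix Finset

/-- For the multi-line observer error dynamics
`c̃' = -k_c c̃`, `τ̃ᵢ' = (Tᵢᵀν) χ̃ᵢ - k_τᵢ τ̃ᵢ`,
`χ̃ᵢ' = (Xᵢᵀν)(χᵢ + χ̂ᵢ) χ̃ᵢ - k_χᵢ (Tᵢᵀν)ᵀ τ̃ᵢ`,
the Lyapunov function `V = ½ Σᵢ (‖τ̃ᵢ‖² + χ̃ᵢ²/k_χᵢ) + ½‖c̃‖²` has time derivative
`V' = -k_c ‖c̃‖² + Σᵢ (-k_τᵢ ‖τ̃ᵢ‖² + (1/k_χᵢ)(Xᵢᵀν)(χᵢ + χ̂ᵢ) χ̃ᵢ²)`. -/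
theorem lyapunov_derivative_multiline (N : ℕ)
    (τe : Fin N → ℝ → EuclideanSpace ℝ (Fin 2))
    (χe χ χhat : Fin N → ℝ → ℝ)
    (ce : ℝ → EuclideanSpace ℝ (Fin 3))
    (T : Fin N → ℝ → Matrix (Fin 3) (Fin 2) ℝ)
    (X : Fin N → ℝ → EuclideanSpace ℝ (Fin 3))
    (ν : ℝ → EuclideanSpace ℝ (Fin 3))
    (kc : ℝ) (kτ kχ : Fin N → ℝ)
    (hkc : 0 < kc) (hkτ : ∀ i, 0 < kτ i) (hkχ : ∀ i, 0 < kχ i)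
    (hc : ∀ t, HasDerivAt ce (-kc • ce t) t)
    (hτ : ∀ i t, HasDerivAt (τe i)
      (χe i t • (WithLp.equiv 2 (Fin 2 → ℝ)).symm ((T i t)ᵀ.mulVec (ν t)) - kτ i • τe i t) t)
    (hχ : ∀ i t, HasDerivAt (χe i)
      ((X i t ⬝ᵥ ν t) * (χ i t + χhat i t) * χe i t
        - kχ i * ((T i t)ᵀ.mulVec (ν t) ⬝ᵥ τe i t)) t) :
    ∀ t, HasDerivAt
      (fun s => (1 / 2) * ∑ i, (‖τe i s‖ ^ 2 + χe i s ^ 2 / kχ i)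
        + (1 / 2) * ‖ce s‖ ^ 2)
      (-kc * ‖ce t‖ ^ 2 + ∑ i, (-kτ i * ‖τe i t‖ ^ 2
        + (1 / kχ i) * (X i t ⬝ᵥ ν t) * (χ i t + χhat i t) * χe i t ^ 2)) t := by
  intro t
  have hct : HasDerivAt (fun s => ‖ce s‖ ^ 2)
      (2 * (inner ℝ (ce t) (-kc • ce t) : ℝ)) t := (hc t).norm_sq
  have hsum : ∀ i : Fin N, HasDerivAt (fun s => ‖τe i s‖ ^ 2 + χe i s ^ 2 / kχ i)
      (2 * (inner ℝ (τe i t) (χe i t • (WithLp.equiv 2 (Fin 2 → ℝ)).symm ((T i t)ᵀ.mulVec (ν t)) - kτ i • τe i t) : ℝ)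
       + 2 * χe i t * ((X i t ⬝ᵥ ν t) * (χ i t + χhat i t) * χe i t
        - kχ i * ((T i t)ᵀ.mulVec (ν t) ⬝ᵥ τe i t)) / kχ i) t := by
    intro i
    have h1 := (hτ i t).norm_sq
    have h2 : HasDerivAt (fun s => χe i s ^ 2 / kχ i)
        (2 * χe i t * ((X i t ⬝ᵥ ν t) * (χ i t + χhat i t) * χe i t
        - kχ i * ((T i t)ᵀ.mulVec (ν t) ⬝ᵥ τe i t)) / kχ i) t := by
      have := ((hχ i t).pow 2).div_const (kχ i)
      exact this.congr_deriv (by rw [show (2:ℕ) - 1 = 1 from rfl, pow_one]; push_cast; ring)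
    exact h1.add h2
  have H := ((HasDerivAt.fun_sum (fun i (_ : i ∈ Finset.univ) => hsum i)).const_mul (1/2 : ℝ)).add
    (hct.const_mul (1/2 : ℝ))
  refine H.congr_deriv (Eq.symm ?_)
  rw [add_comm]
  congr 1
  swap
  · rw [inner_smul_right, real_inner_self_eq_norm_sq]; ring
  · rw [Finset.mul_sum]
    refine Finset.sum_congr rfl fun i _ => ?_
    rw [inner_sub_right, inner_smul_right, inner_smul_right, real_inner_self_eq_norm_sq]
    have hdp : (inner ℝ (τe i t) ((WithLp.equiv 2 (Fin 2 → ℝ)).symm ((T i t)ᵀ.mulVec (ν t))) : ℝ)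
        = (T i t)ᵀ.mulVec (ν t) ⬝ᵥ τe i t := by
      rw [PiLp.inner_apply]
      simp [RCLike.inner_apply, dotProduct, mul_comm]
    rw [hdp]
    have hk := (hkχ i).ne'
    field_simp
    ring
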